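/- If the parameters ū = {u_1,...,u_n} satisfy the Bethe equations λ_1(u_j)/λ_2(u_j) = ∏_{i≠j} f(u_j,u_i) / ∏_{i≠j} f(u_i,u_j) for all j, then the residue of τ(z|ū) at each z = u_j vanishes; equivalently, (z - u_j)·τ(z|ū) → 0 as z → u_j for every j. -/
import Mathlib


open Finset Filter

/-- If the parameters `ū` satisfy the Bethe equations
`λ₁(u_j)/λ₂(u_j) = ∏_{i≠j} f(u_j,u_i) / ∏_{i≠j} f(u_i,u_j)`,
then the residue of `τ(z|ū)` at every `z = u_j` vanishes, i.e.
`(z - u_j)·τ(z|ū) → 0` as `z → u_j`. -/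
theorem residue_vanishes_of_bethe (c : ℂ) (hc : c ≠ 0) (n : ℕ) (u : Fin n → ℂ)
    (hu : Function.Injective u)
    (hdiff : ∀ i j : Fin n, i ≠ j → u i - u j ≠ c ∧ u i - u j ≠ -c)
    (l1 l2 : ℂ → ℂ)
    (hreg1 : ∀ j, ContinuousAt l1 (u j)) (hreg2 : ∀ j, ContinuousAt l2 (u j))
    (hnz1 : ∀ j, l1 (u j) ≠ 0) (hnz2 : ∀ j, l2 (u j) ≠ 0)
    (hBethe : ∀ j : Fin n, l1 (u j) / l2 (u j) =
      (∏ i ∈ univ.erase j, ((u j - u i + c) / (u j - u i))) /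
      (∏ i ∈ univ.erase j, ((u i - u j + c) / (u i - u j)))) :
    ∀ j : Fin n,
      Tendsto
        (fun z : ℂ => (z - u j) *
          (l1 z * ∏ i, ((u i - z + c) / (u i - z)) +
           l2 z * ∏ i, ((z - u i + c) / (z - u i))))
        (nhdsWithin (u j) {u j}ᶜ) (nhds 0) := by
  intro j
  have hne : ∀ i ∈ univ.erase j, u i - u j ≠ 0 := by
    intro i hi
    have hij : i ≠ j := (mem_erase.mp hi).1
    exact sub_ne_zero.mpr (fun h => hij (hu h))
  set P1 : ℂ := ∏ i ∈ univ.erase j, ((u i - u j + c) / (u i - u j)) with hP1def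
  set P2 : ℂ := ∏ i ∈ univ.erase j, ((u j - u i + c) / (u j - u i)) with hP2def
  have hP1 : P1 ≠ 0 := by
    refine Finset.prod_ne_zero_iff.mpr ?_
    intro i hi
    have hij : i ≠ j := (mem_erase.mp hi).1
    have h1 : u i - u j + c ≠ 0 := by
      intro h; exact (hdiff i j hij).2 (by linear_combination h)
    exact div_ne_zero h1 (hne i hi)
  have key : l1 (u j) * P1 = l2 (u j) * P2 := by
    have h := hBethe j
    rw [div_eq_div_iff (hnz2 j) hP1] at h
    linear_combination h
  set g : ℂ → ℂ := fun z =>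
    -(u j - z + c) * (l1 z * ∏ i ∈ univ.erase j, ((u i - z + c) / (u i - z))) +
    (z - u j + c) * (l2 z * ∏ i ∈ univ.erase j, ((z - u i + c) / (z - u i))) with hgdef
  have hg : Tendsto g (nhds (u j)) (nhds 0) := by
    have hcont : ContinuousAt g (u j) := by
      apply ContinuousAt.add
      · apply ContinuousAt.mul (by fun_prop)
        apply ContinuousAt.mul (hreg1 j)
        exact tendsto_finset_prod _ fun i hi =>
          ContinuousAt.div (by fun_prop) (by fun_prop) (hne i hi)
      · apply ContinuousAt.mul (by fun_prop)
        apply ContinuousAt.mul (hreg2 j)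
        refine tendsto_finset_prod _ fun i hi => ?_
        have hji : u j - u i ≠ 0 := by
          have := hne i hi; intro h; apply this; linear_combination -h
        exact ContinuousAt.div (by fun_prop) (by fun_prop) hji
    have hval : g (u j) = 0 := by
      simp only [hgdef]
      have : ∀ i ∈ univ.erase j, ((u i - u j + c) / (u i - u j)) = ((u i - u j + c) / (u i - u j)) := fun _ _ => rfl
      simp only [sub_self]
      linear_combination -c * key
    rw [← hval]
    exact hcont.tendsto
  refine (hg.mono_left nhdsWithin_le_nhds).congr' ?_
  filter_upwards [self_mem_nhdsWithin] with z hz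
  have hz' : z ≠ u j := hz
  have hzj : u j - z ≠ 0 := sub_ne_zero.mpr (Ne.symm hz')
  have hzj' : z - u j ≠ 0 := sub_ne_zero.mpr hz'
  have h1 : (z - u j) * ((u j - z + c) / (u j - z)) = -(u j - z + c) := by
    field_simp
    ring
  have h2 : (z - u j) * ((z - u j + c) / (z - u j)) = z - u j + c := by
    field_simp
  have e1 : (∏ i, ((u i - z + c) / (u i - z))) =
      ((u j - z + c) / (u j - z)) * ∏ i ∈ univ.erase j, ((u i - z + c) / (u i - z)) :=
    (Finset.mul_prod_erase univ _ (mem_univ j)).symm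
  have e2 : (∏ i, ((z - u i + c) / (z - u i))) =
      ((z - u j + c) / (z - u j)) * ∏ i ∈ univ.erase j, ((z - u i + c) / (z - u i)) :=
    (Finset.mul_prod_erase univ _ (mem_univ j)).symm
  simp only [hgdef]
  rw [e1, e2]
  linear_combination (-(l1 z * ∏ i ∈ univ.erase j, ((u i - z + c) / (u i - z)))) * h1 -
    (l2 z * ∏ i ∈ univ.erase j, ((z - u i + c) / (z - u i))) * h2
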